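/- arXiv:1105.4396 — 3 statements merged into one kernel-verified Lean document; each statement's English description precedes it below -/
import Mathlib

section
/- For the MA(q) process with q > 2 and continuous i.i.d. innovations, the probability that the four conditions ξ_{i-1} < ξ_i, ξ_i > ξ_{i+1}, ξ_{i+1} < ξ_{i+2}, ξ_{i+2} > ξ_{i+3} all hold equals 1/16. -/
open MeasureTheory ProbabilityTheory

/-- Error terms of an MA(q) process: `ξ i ω = ∑_{j=0}^q ε (i - j) ω`. -/
noncomputable def MAerr {Ω : Type*} (q : ℕ) (ε : ℤ → Ω → ℝ) (i : ℤ) (ω : Ω) : ℝ :=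
  ∑ j ∈ Finset.range (q + 1), ε (i - (j : ℤ)) ω

/-- Two distinct innovations compare either way with probability `1/2`. -/
lemma MA_eps_lt_half {Ω : Type*} [MeasurableSpace Ω] (μ : Measure Ω) [IsProbabilityMeasure μ]
    (ε : ℤ → Ω → ℝ) (hmeas : ∀ i, Measurable (ε i))
    (hindep : iIndepFun ε μ)
    (hid : ∀ i j : ℤ, IdentDistrib (ε i) (ε j) μ μ)
    (hatomless : ∀ (i : ℤ) (a : ℝ), μ {ω | ε i ω = a} = 0)
    {a b : ℤ} (hab : a ≠ b) : μ {ω | ε a ω < ε b ω} = 1/2 := by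
  set ν := μ.map (ε a) with hν
  have hνprob : IsProbabilityMeasure ν := Measure.isProbabilityMeasure_map (hmeas a).aemeasurable
  have hXY : IndepFun (ε a) (ε b) μ := hindep.indepFun hab
  have hprod : μ.map (fun ω => (ε a ω, ε b ω)) = ν.prod ν := by
    rw [(indepFun_iff_map_prod_eq_prod_map_map (hmeas a).aemeasurable
      (hmeas b).aemeasurable).mp hXY, (hid b a).map_eq]
  have key : ∀ s : Set (ℝ × ℝ), MeasurableSet s →
      μ ((fun ω => (ε a ω, ε b ω)) ⁻¹' s) = (ν.prod ν) s := by
    intro s hs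
    rw [← hprod, Measure.map_apply ((hmeas a).prodMk (hmeas b)) hs]
  have hsingle : ∀ x : ℝ, ν {x} = 0 := by
    intro x
    rw [hν, Measure.map_apply (hmeas a) (measurableSet_singleton x)]
    exact hatomless a x
  have heq0 : μ {ω | ε a ω = ε b ω} = 0 := by
    have hd : MeasurableSet {p : ℝ × ℝ | p.1 = p.2} :=
      measurableSet_eq_fun measurable_fst measurable_snd
    have h1 : μ {ω | ε a ω = ε b ω} = (ν.prod ν) {p : ℝ × ℝ | p.1 = p.2} := key _ hd
    have hx : ∀ x : ℝ, Prod.mk x ⁻¹' {p : ℝ × ℝ | p.1 = p.2} = {x} := by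
      intro x; ext y; simp [eq_comm]
    rw [h1, Measure.prod_apply hd]
    simp [hx, hsingle]
  have hswap : (ν.prod ν) {p : ℝ × ℝ | p.2 < p.1} = (ν.prod ν) {p : ℝ × ℝ | p.1 < p.2} := by
    conv_lhs => rw [← Measure.prod_swap]
    rw [Measure.map_apply measurable_swap (measurableSet_lt measurable_snd measurable_fst)]
    congr 1
  have hgt : μ {ω | ε b ω < ε a ω} = μ {ω | ε a ω < ε b ω} := by
    have h1 : μ {ω | ε b ω < ε a ω} = (ν.prod ν) {p : ℝ × ℝ | p.2 < p.1} :=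
      key _ (measurableSet_lt measurable_snd measurable_fst)
    have h2 : μ {ω | ε a ω < ε b ω} = (ν.prod ν) {p : ℝ × ℝ | p.1 < p.2} :=
      key _ (measurableSet_lt measurable_fst measurable_snd)
    rw [h1, h2, hswap]
  have hms : MeasurableSet {ω | ε a ω < ε b ω} := measurableSet_lt (hmeas a) (hmeas b)
  have hcompl : μ {ω | ε a ω < ε b ω}ᶜ = μ {ω | ε a ω < ε b ω} := by
    have hsplit : {ω | ε a ω < ε b ω}ᶜ = {ω | ε b ω < ε a ω} ∪ {ω | ε a ω = ε b ω} := by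
      ext ω
      simp only [Set.mem_compl_iff, Set.mem_setOf_eq, Set.mem_union, not_lt]
      constructor
      · intro h
        rcases h.lt_or_eq with h' | h'
        · exact Or.inl h'
        · exact Or.inr h'.symm
      · rintro (h | h)
        · exact h.le
        · exact h.ge
    rw [hsplit]
    have hu : μ ({ω | ε b ω < ε a ω} ∪ {ω | ε a ω = ε b ω}) = μ {ω | ε b ω < ε a ω} := by
      refine le_antisymm ?_ (measure_mono Set.subset_union_left)
      calc μ ({ω | ε b ω < ε a ω} ∪ {ω | ε a ω = ε b ω})
          ≤ μ {ω | ε b ω < ε a ω} + μ {ω | ε a ω = ε b ω} := measure_union_le _ _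
        _ = μ {ω | ε b ω < ε a ω} := by rw [heq0, add_zero]
    rw [hu, hgt]
  have htot := prob_add_prob_compl (μ := μ) hms
  rw [hcompl, ← two_mul] at htot
  have hfin : μ {ω | ε a ω < ε b ω} = 2⁻¹ * (2 * μ {ω | ε a ω < ε b ω}) := by
    rw [← mul_assoc, ENNReal.inv_mul_cancel two_ne_zero ENNReal.ofNat_ne_top, one_mul]
  rw [hfin, htot, mul_one, ← one_div]

/-- Splitting off one comparison event from a tuple event over disjoint indices. -/
lemma MA_step_mul {Ω : Type*} [MeasurableSpace Ω] {μ : Measure Ω} {ε : ℤ → Ω → ℝ}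
    (hmeas : ∀ i, Measurable (ε i)) (hindep : iIndepFun ε μ)
    (a b : ℤ) (T : Finset ℤ) (ha : a ∉ T) (hb : b ∉ T)
    (t : Set ((j : T) → ℝ)) (ht : MeasurableSet t) :
    μ ({ω | ε a ω < ε b ω} ∩ (fun ω (j : T) => ε j ω) ⁻¹' t)
      = μ {ω | ε a ω < ε b ω} * μ ((fun ω (j : T) => ε j ω) ⁻¹' t) := by
  classical
  have haS : a ∈ ({a, b} : Finset ℤ) := by simp
  have hbS : b ∈ ({a, b} : Finset ℤ) := by simp
  have hST : Disjoint ({a, b} : Finset ℤ) T := by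
    rw [Finset.disjoint_left]
    intro x hx
    simp only [Finset.mem_insert, Finset.mem_singleton] at hx
    rcases hx with rfl | rfl
    · exact ha
    · exact hb
  have hIF := hindep.indepFun_finset {a, b} T hST hmeas
  have hs : MeasurableSet {v : (j : ({a, b} : Finset ℤ)) → ℝ | v ⟨a, haS⟩ < v ⟨b, hbS⟩} :=
    measurableSet_lt (measurable_pi_apply _) (measurable_pi_apply _)
  have h := hIF.measure_inter_preimage_eq_mul _ _ hs ht
  have hE : (fun ω (j : ({a, b} : Finset ℤ)) => ε j ω) ⁻¹'
      {v | v ⟨a, haS⟩ < v ⟨b, hbS⟩} = {ω | ε a ω < ε b ω} := rfl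
  rw [← hE]
  exact h

lemma MAerr_sub {Ω : Type*} (q : ℕ) (ε : ℤ → Ω → ℝ) (a : ℤ) (ω : Ω) :
    MAerr q ε a ω - MAerr q ε (a - 1) ω = ε a ω - ε (a - 1 - q) ω := by
  induction q with
  | zero => simp [MAerr]
  | succ q ih =>
    have h1 : MAerr (q + 1) ε a ω = MAerr q ε a ω + ε (a - ((q + 1 : ℕ) : ℤ)) ω := by
      unfold MAerr; rw [Finset.sum_range_succ]
    have h2 : MAerr (q + 1) ε (a - 1) ω
        = MAerr q ε (a - 1) ω + ε (a - 1 - ((q + 1 : ℕ) : ℤ)) ω := by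
      unfold MAerr; rw [Finset.sum_range_succ]
    have h3 : ε (a - ((q + 1 : ℕ) : ℤ)) ω = ε (a - 1 - (q : ℤ)) ω := by
      congr 1; push_cast; ring
    rw [h1, h2, h3]
    linarith [ih]

lemma MAerr_lt_iff {Ω : Type*} (q : ℕ) (ε : ℤ → Ω → ℝ) (a : ℤ) (ω : Ω) :
    MAerr q ε (a - 1) ω < MAerr q ε a ω ↔ ε (a - 1 - q) ω < ε a ω := by
  rw [← sub_pos, ← sub_pos (b := ε (a - 1 - (q : ℤ)) ω), MAerr_sub]

lemma MAerr_gt_iff {Ω : Type*} (q : ℕ) (ε : ℤ → Ω → ℝ) (a : ℤ) (ω : Ω) :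
    MAerr q ε a ω < MAerr q ε (a - 1) ω ↔ ε a ω < ε (a - 1 - q) ω := by
  rw [← sub_neg, ← sub_neg (b := ε (a - 1 - (q : ℤ)) ω), MAerr_sub]

/-- For `q > 2` with atomless i.i.d. innovations, the probability that
`ξ_{i-1} < ξ_i > ξ_{i+1} < ξ_{i+2} > ξ_{i+3}` equals `1/16`. -/
theorem MA_prob_dist2_joint
    {Ω : Type*} [MeasurableSpace Ω] (μ : Measure Ω) [IsProbabilityMeasure μ]
    (ε : ℤ → Ω → ℝ) (hmeas : ∀ i, Measurable (ε i))
    (hindep : iIndepFun ε μ)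
    (hid : ∀ i j : ℤ, IdentDistrib (ε i) (ε j) μ μ)
    (hatomless : ∀ (i : ℤ) (a : ℝ), μ {ω | ε i ω = a} = 0)
    (q : ℕ) (hq : 2 < q) (i : ℤ) :
    μ {ω | MAerr q ε (i - 1) ω < MAerr q ε i ω ∧ MAerr q ε i ω > MAerr q ε (i + 1) ω ∧
        MAerr q ε (i + 1) ω < MAerr q ε (i + 2) ω ∧
        MAerr q ε (i + 2) ω > MAerr q ε (i + 3) ω} = 1 / 16 := by
  classical
  have hq' : (2 : ℤ) < (q : ℤ) := by exact_mod_cast hq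
  -- pointwise reformulations
  have e1 : ∀ ω : Ω, (MAerr q ε (i - 1) ω < MAerr q ε i ω ↔ ε (i - 1 - q) ω < ε i ω) :=
    fun ω => MAerr_lt_iff q ε i ω
  have e2 : ∀ ω : Ω, (MAerr q ε i ω > MAerr q ε (i + 1) ω ↔ ε (i + 1) ω < ε (i - q) ω) := by
    intro ω
    have h := MAerr_gt_iff q ε (i + 1) ω
    rw [show i + 1 - 1 - (q : ℤ) = i - q from by ring, show i + 1 - 1 = i from by ring] at h
    exact h
  have e3 : ∀ ω : Ω,
      (MAerr q ε (i + 1) ω < MAerr q ε (i + 2) ω ↔ ε (i + 1 - q) ω < ε (i + 2) ω) := by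
    intro ω
    have h := MAerr_lt_iff q ε (i + 2) ω
    rw [show i + 2 - 1 - (q : ℤ) = i + 1 - q from by ring,
      show i + 2 - 1 = i + 1 from by ring] at h
    exact h
  have e4 : ∀ ω : Ω,
      (MAerr q ε (i + 2) ω > MAerr q ε (i + 3) ω ↔ ε (i + 3) ω < ε (i + 2 - q) ω) := by
    intro ω
    have h := MAerr_gt_iff q ε (i + 3) ω
    rw [show i + 3 - 1 - (q : ℤ) = i + 2 - q from by ring,
      show i + 3 - 1 = i + 2 from by ring] at h
    exact h
  -- index sets
  set T3 : Finset ℤ := {i + 3, i + 2 - q} with hT3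
  set T2 : Finset ℤ := insert (i + 1 - q) (insert (i + 2) T3) with hT2
  set T1 : Finset ℤ := insert (i + 1) (insert (i - q) T2) with hT1
  have m3a : i + 3 ∈ T3 := by simp [hT3]
  have m3b : i + 2 - q ∈ T3 := by simp [hT3]
  have m2a : i + 1 - q ∈ T2 := by simp [hT2]
  have m2b : i + 2 ∈ T2 := by simp [hT2]
  have m2c : i + 3 ∈ T2 := by simp [hT2, hT3]
  have m2d : i + 2 - q ∈ T2 := by simp [hT2, hT3]
  have m1a : i + 1 ∈ T1 := by simp [hT1]
  have m1b : i - q ∈ T1 := by simp [hT1]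
  have m1c : i + 1 - q ∈ T1 := by simp [hT1, hT2]
  have m1d : i + 2 ∈ T1 := by simp [hT1, hT2]
  have m1e : i + 3 ∈ T1 := by simp [hT1, hT2, hT3]
  have m1f : i + 2 - q ∈ T1 := by simp [hT1, hT2, hT3]
  -- target tuple sets
  set t3 : Set ((j : T3) → ℝ) := {v | v ⟨i + 3, m3a⟩ < v ⟨i + 2 - q, m3b⟩} with ht3d
  set t2 : Set ((j : T2) → ℝ) :=
    {v | v ⟨i + 1 - q, m2a⟩ < v ⟨i + 2, m2b⟩ ∧ v ⟨i + 3, m2c⟩ < v ⟨i + 2 - q, m2d⟩} with ht2d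
  set t1 : Set ((j : T1) → ℝ) :=
    {v | v ⟨i + 1, m1a⟩ < v ⟨i - q, m1b⟩ ∧
      (v ⟨i + 1 - q, m1c⟩ < v ⟨i + 2, m1d⟩ ∧ v ⟨i + 3, m1e⟩ < v ⟨i + 2 - q, m1f⟩)} with ht1d
  have hmt3 : MeasurableSet t3 :=
    measurableSet_lt (measurable_pi_apply _) (measurable_pi_apply _)
  have hmt2 : MeasurableSet t2 := by
    have ht : t2 = {v : (j : T2) → ℝ | v ⟨i + 1 - q, m2a⟩ < v ⟨i + 2, m2b⟩}
        ∩ {v | v ⟨i + 3, m2c⟩ < v ⟨i + 2 - q, m2d⟩} := rfl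
    rw [ht]
    exact (measurableSet_lt (measurable_pi_apply (⟨i + 1 - q, m2a⟩ : T2))
        (measurable_pi_apply (⟨i + 2, m2b⟩ : T2))).inter
      (measurableSet_lt (measurable_pi_apply (⟨i + 3, m2c⟩ : T2))
        (measurable_pi_apply (⟨i + 2 - q, m2d⟩ : T2)))
  have hmt1 : MeasurableSet t1 := by
    have ht : t1 = {v : (j : T1) → ℝ | v ⟨i + 1, m1a⟩ < v ⟨i - q, m1b⟩}
        ∩ ({v | v ⟨i + 1 - q, m1c⟩ < v ⟨i + 2, m1d⟩}
          ∩ {v | v ⟨i + 3, m1e⟩ < v ⟨i + 2 - q, m1f⟩}) := rfl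
    rw [ht]
    exact (measurableSet_lt (measurable_pi_apply (⟨i + 1, m1a⟩ : T1))
        (measurable_pi_apply (⟨i - q, m1b⟩ : T1))).inter
      ((measurableSet_lt (measurable_pi_apply (⟨i + 1 - q, m1c⟩ : T1))
          (measurable_pi_apply (⟨i + 2, m1d⟩ : T1))).inter
        (measurableSet_lt (measurable_pi_apply (⟨i + 3, m1e⟩ : T1))
          (measurable_pi_apply (⟨i + 2 - q, m1f⟩ : T1))))
  -- non-membership conditions
  have n1a : i - 1 - (q : ℤ) ∉ T1 := by
    simp only [hT1, hT2, hT3, Finset.mem_insert, Finset.mem_singleton]; omega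
  have n1b : i ∉ T1 := by
    simp only [hT1, hT2, hT3, Finset.mem_insert, Finset.mem_singleton]; omega
  have n2a : i + 1 ∉ T2 := by
    simp only [hT2, hT3, Finset.mem_insert, Finset.mem_singleton]; omega
  have n2b : i - (q : ℤ) ∉ T2 := by
    simp only [hT2, hT3, Finset.mem_insert, Finset.mem_singleton]; omega
  have n3a : i + 1 - (q : ℤ) ∉ T3 := by
    simp only [hT3, Finset.mem_insert, Finset.mem_singleton]; omega
  have n3b : i + 2 ∉ T3 := by
    simp only [hT3, Finset.mem_insert, Finset.mem_singleton]; omega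
  -- the chain
  have key1 := MA_step_mul hmeas hindep (i - 1 - q) i T1 n1a n1b t1 hmt1
  have key2 := MA_step_mul hmeas hindep (i + 1) (i - q) T2 n2a n2b t2 hmt2
  have key3 := MA_step_mul hmeas hindep (i + 1 - q) (i + 2) T3 n3a n3b t3 hmt3
  have hbig : {ω | MAerr q ε (i - 1) ω < MAerr q ε i ω ∧
      MAerr q ε i ω > MAerr q ε (i + 1) ω ∧
      MAerr q ε (i + 1) ω < MAerr q ε (i + 2) ω ∧
      MAerr q ε (i + 2) ω > MAerr q ε (i + 3) ω}
      = {ω | ε (i - 1 - q) ω < ε i ω} ∩ ((fun ω (j : T1) => ε j ω) ⁻¹' t1) := by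
    ext ω
    exact and_congr (e1 ω) (and_congr (e2 ω) (and_congr (e3 ω) (e4 ω)))
  have hpre1 : (fun ω (j : T1) => ε j ω) ⁻¹' t1
      = {ω | ε (i + 1) ω < ε (i - q) ω} ∩ ((fun ω (j : T2) => ε j ω) ⁻¹' t2) :=
    Set.ext fun ω => Iff.rfl
  have hpre2 : (fun ω (j : T2) => ε j ω) ⁻¹' t2
      = {ω | ε (i + 1 - q) ω < ε (i + 2) ω} ∩ ((fun ω (j : T3) => ε j ω) ⁻¹' t3) :=
    Set.ext fun ω => Iff.rfl
  have hpre3 : (fun ω (j : T3) => ε j ω) ⁻¹' t3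
      = {ω | ε (i + 3) ω < ε (i + 2 - q) ω} :=
    Set.ext fun ω => Iff.rfl
  have half := fun (a b : ℤ) (hab : a ≠ b) =>
    MA_eps_lt_half μ ε hmeas hindep hid hatomless hab
  rw [hbig, key1, hpre1, key2, hpre2, key3, hpre3,
    half _ _ (by omega), half _ _ (by omega), half _ _ (by omega), half _ _ (by omega)]
  have h : ∀ a b : ENNReal, a ≠ 0 → b ≠ 0 → a⁻¹ * b⁻¹ = (a * b)⁻¹ := fun a b ha hb =>
    (ENNReal.mul_inv (Or.inl ha) (Or.inr hb)).symm
  simp only [one_div]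
  rw [h 2 2 (by norm_num) (by norm_num), h 2 (2 * 2) (by norm_num) (by norm_num),
    h 2 (2 * (2 * 2)) (by norm_num) (by norm_num)]
  norm_num
end

section
/- For the MA(q) process with q > 3 and continuous i.i.d. innovations, the conditional probability that the next local maximum after ξ_i occurs at distance 3 (at ξ_{i+3}), given a local maximum at ξ_i, equals 1/4. -/
open MeasureTheory ProbabilityTheory

section Aux

variable {Ω : Type*} [MeasurableSpace Ω] {μ : Measure Ω} [IsProbabilityMeasure μ]
  {ε : ℤ → Ω → ℝ}

lemma MAerr_succ_sub (q : ℕ) (ε : ℤ → Ω → ℝ) (k : ℤ) (ω : Ω) :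
    MAerr q ε (k + 1) ω = MAerr q ε k ω + ε (k + 1) ω - ε (k - (q : ℤ)) ω := by
  unfold MAerr
  rw [Finset.sum_range_succ' (fun j => ε (k + 1 - (j : ℤ)) ω),
    Finset.sum_range_succ (fun j => ε (k - (j : ℤ)) ω)]
  have h : ∀ j ∈ Finset.range q,
      ε (k + 1 - (((j : ℕ) + 1 : ℕ) : ℤ)) ω = ε (k - (j : ℤ)) ω := by
    intro j _
    congr 1
    push_cast
    ring
  rw [Finset.sum_congr rfl h]
  push_cast
  ring

lemma MAerr_lt_succ_iff (q : ℕ) (ε : ℤ → Ω → ℝ) (k : ℤ) (ω : Ω) :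
    MAerr q ε k ω < MAerr q ε (k + 1) ω ↔ ε (k - (q : ℤ)) ω < ε (k + 1) ω := by
  rw [MAerr_succ_sub]; constructor <;> intro h <;> linarith

lemma MAerr_gt_succ_iff (q : ℕ) (ε : ℤ → Ω → ℝ) (k : ℤ) (ω : Ω) :
    MAerr q ε (k + 1) ω < MAerr q ε k ω ↔ ε (k + 1) ω < ε (k - (q : ℤ)) ω := by
  rw [MAerr_succ_sub]; constructor <;> intro h <;> linarith

lemma aux_map_pair (hmeas : ∀ i, Measurable (ε i))
    (hindep : iIndepFun ε μ) {a b : ℤ} (hab : a ≠ b) :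
    μ.map (fun ω => (ε a ω, ε b ω)) = (μ.map (ε a)).prod (μ.map (ε b)) :=
  (indepFun_iff_map_prod_eq_prod_map_map (hmeas a).aemeasurable
    (hmeas b).aemeasurable).1 (hindep.indepFun hab)

lemma aux_eq_null (hmeas : ∀ i, Measurable (ε i))
    (hindep : iIndepFun ε μ)
    (hatomless : ∀ (i : ℤ) (a : ℝ), μ {ω | ε i ω = a} = 0) {a b : ℤ} (hab : a ≠ b) :
    μ {ω | ε a ω = ε b ω} = 0 := by
  have hm : MeasurableSet {p : ℝ × ℝ | p.1 = p.2} :=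
    measurableSet_eq_fun measurable_fst measurable_snd
  have hset : {ω | ε a ω = ε b ω}
      = (fun ω => (ε a ω, ε b ω)) ⁻¹' {p : ℝ × ℝ | p.1 = p.2} := rfl
  rw [hset, ← Measure.map_apply ((hmeas a).prodMk (hmeas b)) hm,
    aux_map_pair hmeas hindep hab, Measure.prod_apply hm]
  have h0 : ∀ x : ℝ, (μ.map (ε b)) (Prod.mk x ⁻¹' {p : ℝ × ℝ | p.1 = p.2}) = 0 := by
    intro x
    have hx : (Prod.mk x ⁻¹' {p : ℝ × ℝ | p.1 = p.2}) = {x} := by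
      ext y; simp [eq_comm]
    rw [hx, Measure.map_apply (hmeas b) (measurableSet_singleton x)]
    exact hatomless b x
  calc ∫⁻ x, (μ.map (ε b)) (Prod.mk x ⁻¹' {p : ℝ × ℝ | p.1 = p.2}) ∂(μ.map (ε a))
      = ∫⁻ _, 0 ∂(μ.map (ε a)) := by
        exact lintegral_congr fun x => h0 x
    _ = 0 := lintegral_zero

lemma aux_half (hmeas : ∀ i, Measurable (ε i))
    (hindep : iIndepFun ε μ)
    (hid : ∀ i j : ℤ, IdentDistrib (ε i) (ε j) μ μ)
    (hatomless : ∀ (i : ℤ) (a : ℝ), μ {ω | ε i ω = a} = 0) {a b : ℤ} (hab : a ≠ b) :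
    μ {ω | ε a ω < ε b ω} = 1 / 2 := by
  set ν := μ.map (ε a) with hν
  have hP : IsProbabilityMeasure ν := Measure.isProbabilityMeasure_map (hmeas a).aemeasurable
  have hmap : μ.map (fun ω => (ε a ω, ε b ω)) = ν.prod ν := by
    rw [aux_map_pair hmeas hindep hab, (hid b a).map_eq]
  have hmlt : MeasurableSet {p : ℝ × ℝ | p.1 < p.2} :=
    measurableSet_lt measurable_fst measurable_snd
  have hmgt : MeasurableSet {p : ℝ × ℝ | p.2 < p.1} :=
    measurableSet_lt measurable_snd measurable_fst
  have h1 : μ {ω | ε a ω < ε b ω} = ν.prod ν {p : ℝ × ℝ | p.1 < p.2} := by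
    rw [← hmap, Measure.map_apply ((hmeas a).prodMk (hmeas b)) hmlt]; rfl
  have h2 : μ {ω | ε b ω < ε a ω} = ν.prod ν {p : ℝ × ℝ | p.2 < p.1} := by
    rw [← hmap, Measure.map_apply ((hmeas a).prodMk (hmeas b)) hmgt]; rfl
  have hswap : ν.prod ν {p : ℝ × ℝ | p.2 < p.1} = ν.prod ν {p : ℝ × ℝ | p.1 < p.2} := by
    conv_lhs => rw [← Measure.prod_swap]
    rw [Measure.map_apply measurable_swap hmgt]
    rfl
  have heq : μ {ω | ε a ω = ε b ω} = 0 := aux_eq_null hmeas hindep hatomless hab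
  have hcompl : μ ({ω | ε a ω < ε b ω}ᶜ) = μ {ω | ε b ω < ε a ω} := by
    have hsub : ({ω | ε a ω < ε b ω}ᶜ : Set Ω)
        ⊆ {ω | ε b ω < ε a ω} ∪ {ω | ε a ω = ε b ω} := by
      intro ω hω
      rcases lt_trichotomy (ε a ω) (ε b ω) with h | h | h
      · exact absurd h hω
      · exact Or.inr h
      · exact Or.inl h
    refine le_antisymm ?_ (measure_mono fun ω hω => ?_)
    swap
    · simp only [Set.mem_compl_iff, Set.mem_setOf_eq] at *
      exact not_lt.2 (le_of_lt hω)
    calc μ ({ω | ε a ω < ε b ω}ᶜ)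
        ≤ μ ({ω | ε b ω < ε a ω} ∪ {ω | ε a ω = ε b ω}) := measure_mono hsub
      _ ≤ μ {ω | ε b ω < ε a ω} + μ {ω | ε a ω = ε b ω} := measure_union_le _ _
      _ = μ {ω | ε b ω < ε a ω} := by rw [heq, add_zero]
  have htot : μ {ω | ε a ω < ε b ω} + μ ({ω | ε a ω < ε b ω}ᶜ) = 1 := by
    rw [measure_add_measure_compl (measurableSet_lt (hmeas a) (hmeas b))]
    exact measure_univ
  have h2x : 2 * μ {ω | ε a ω < ε b ω} = 1 := by
    rw [two_mul]
    rw [hcompl, h2, hswap, ← h1] at htot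
    exact htot
  exact (ENNReal.eq_div_iff two_ne_zero ENNReal.ofNat_ne_top).mpr h2x

lemma aux_indep_lt (hmeas : ∀ i, Measurable (ε i))
    (hindep : iIndepFun ε μ) {a b c d : ℤ}
    (hac : a ≠ c) (had : a ≠ d) (hbc : b ≠ c) (hbd : b ≠ d) :
    μ ({ω | ε a ω < ε b ω} ∩ {ω | ε c ω < ε d ω})
      = μ {ω | ε a ω < ε b ω} * μ {ω | ε c ω < ε d ω} := by
  have hmlt : MeasurableSet {p : ℝ × ℝ | p.1 < p.2} :=
    measurableSet_lt measurable_fst measurable_snd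
  exact (hindep.indepFun_prodMk_prodMk hmeas a b c d hac had hbc
    hbd).measure_inter_preimage_eq_mul {p : ℝ × ℝ | p.1 < p.2}
    {p : ℝ × ℝ | p.1 < p.2} hmlt hmlt

lemma aux_indep4 (hmeas : ∀ i, Measurable (ε i))
    (hindep : iIndepFun ε μ) {a b c d a' b' c' d' : ℤ}
    (hdisj : Disjoint ({a, b, c, d} : Finset ℤ) ({a', b', c', d'} : Finset ℤ)) :
    μ (({ω | ε a ω < ε b ω} ∩ {ω | ε c ω < ε d ω})
        ∩ ({ω | ε a' ω < ε b' ω} ∩ {ω | ε c' ω < ε d' ω}))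
      = μ ({ω | ε a ω < ε b ω} ∩ {ω | ε c ω < ε d ω})
        * μ ({ω | ε a' ω < ε b' ω} ∩ {ω | ε c' ω < ε d' ω}) := by
  classical
  let g : ∀ a b c d : ℤ, ((({a, b, c, d} : Finset ℤ) : Type) → ℝ) → (ℝ × ℝ) × (ℝ × ℝ) :=
    fun a b c d v =>
      ((v ⟨a, by simp⟩, v ⟨b, by simp⟩), (v ⟨c, by simp⟩, v ⟨d, by simp⟩))
  have hg : ∀ a b c d : ℤ, Measurable (g a b c d) := by
    intro a b c d
    unfold g
    fun_prop
  have hI : IndepFun (fun ω => ((ε a ω, ε b ω), (ε c ω, ε d ω)))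
      (fun ω => ((ε a' ω, ε b' ω), (ε c' ω, ε d' ω))) μ :=
    (hindep.indepFun_finset {a, b, c, d} {a', b', c', d'} hdisj hmeas).comp
      (hg a b c d) (hg a' b' c' d')
  have hU : MeasurableSet {p : (ℝ × ℝ) × (ℝ × ℝ) | p.1.1 < p.1.2 ∧ p.2.1 < p.2.2} :=
    (measurableSet_lt (measurable_fst.comp measurable_fst)
        (measurable_snd.comp measurable_fst)).inter
      (measurableSet_lt (measurable_fst.comp measurable_snd)
        (measurable_snd.comp measurable_snd))
  exact hI.measure_inter_preimage_eq_mul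
    {p : (ℝ × ℝ) × (ℝ × ℝ) | p.1.1 < p.1.2 ∧ p.2.1 < p.2.2}
    {p : (ℝ × ℝ) × (ℝ × ℝ) | p.1.1 < p.1.2 ∧ p.2.1 < p.2.2} hU hU

end Aux

/-- For `q > 3` with atomless i.i.d. innovations, the conditional probability that the
next local maximum after `ξ_i` occurs at distance `3`, given a local maximum at `i`,
equals `1/4`. -/
theorem MA_cond_prob_dist3
    {Ω : Type*} [MeasurableSpace Ω] (μ : Measure Ω) [IsProbabilityMeasure μ]
    (ε : ℤ → Ω → ℝ) (hmeas : ∀ i, Measurable (ε i))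
    (hindep : iIndepFun ε μ)
    (hid : ∀ i j : ℤ, IdentDistrib (ε i) (ε j) μ μ)
    (hatomless : ∀ (i : ℤ) (a : ℝ), μ {ω | ε i ω = a} = 0)
    (q : ℕ) (hq : 3 < q) (i : ℤ) :
    μ[|{ω | MAerr q ε (i - 1) ω < MAerr q ε i ω ∧ MAerr q ε i ω > MAerr q ε (i + 1) ω}]
      {ω | ((MAerr q ε (i + 1) ω < MAerr q ε (i + 2) ω ∧
              MAerr q ε (i + 2) ω < MAerr q ε (i + 3) ω) ∨
            (MAerr q ε (i + 1) ω > MAerr q ε (i + 2) ω ∧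
              MAerr q ε (i + 2) ω < MAerr q ε (i + 3) ω)) ∧
        MAerr q ε (i + 3) ω > MAerr q ε (i + 4) ω} = 1 / 4 := by
  have q4 : (3 : ℤ) < (q : ℤ) := by exact_mod_cast hq
  set Q : ℤ := (q : ℤ) with hQ
  -- translate MAerr inequalities at each step
  have step : ∀ (k : ℤ) (ω : Ω),
      (MAerr q ε k ω < MAerr q ε (k + 1) ω ↔ ε (k - Q) ω < ε (k + 1) ω)
      ∧ (MAerr q ε (k + 1) ω < MAerr q ε k ω ↔ ε (k + 1) ω < ε (k - Q) ω) :=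
    fun k ω => ⟨MAerr_lt_succ_iff q ε k ω, MAerr_gt_succ_iff q ε k ω⟩
  -- condition event
  have hs_eq : {ω | MAerr q ε (i - 1) ω < MAerr q ε i ω ∧ MAerr q ε i ω > MAerr q ε (i + 1) ω}
      = {ω | ε (i - 1 - Q) ω < ε i ω} ∩ {ω | ε (i + 1) ω < ε (i - Q) ω} := by
    ext ω
    have h1 := (step (i - 1) ω).1
    rw [show i - 1 + 1 = i by ring] at h1
    have h2 := (step i ω).2
    simp only [Set.mem_setOf_eq, Set.mem_inter_iff, gt_iff_lt]
    rw [h1, h2]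
  -- target event
  have ht_eq : {ω | ((MAerr q ε (i + 1) ω < MAerr q ε (i + 2) ω ∧
              MAerr q ε (i + 2) ω < MAerr q ε (i + 3) ω) ∨
            (MAerr q ε (i + 1) ω > MAerr q ε (i + 2) ω ∧
              MAerr q ε (i + 2) ω < MAerr q ε (i + 3) ω)) ∧
        MAerr q ε (i + 3) ω > MAerr q ε (i + 4) ω}
      = {ω | ε (i + 1 - Q) ω ≠ ε (i + 2) ω}
        ∩ ({ω | ε (i + 2 - Q) ω < ε (i + 3) ω} ∩ {ω | ε (i + 4) ω < ε (i + 3 - Q) ω}) := by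
    ext ω
    have h3 := (step (i + 1) ω).1
    have h3' := (step (i + 1) ω).2
    rw [show i + 1 + 1 = i + 2 by ring] at h3 h3'
    have h4 := (step (i + 2) ω).1
    rw [show i + 2 + 1 = i + 3 by ring] at h4
    have h5 := (step (i + 3) ω).2
    rw [show i + 3 + 1 = i + 4 by ring] at h5
    simp only [Set.mem_setOf_eq, Set.mem_inter_iff, gt_iff_lt]
    rw [h3, h3', h4, h5]
    constructor
    · rintro ⟨h12 | h12, hr⟩
      · exact ⟨ne_of_lt h12.1, h12.2, hr⟩
      · exact ⟨(ne_of_lt h12.1).symm, h12.2, hr⟩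
    · rintro ⟨hne, h2, hr⟩
      rcases lt_or_gt_of_ne hne with h | h
      · exact ⟨Or.inl ⟨h, h2⟩, hr⟩
      · exact ⟨Or.inr ⟨h, h2⟩, hr⟩
  set s : Set Ω := {ω | ε (i - 1 - Q) ω < ε i ω} ∩ {ω | ε (i + 1) ω < ε (i - Q) ω} with hs
  set B : Set Ω := {ω | ε (i + 2 - Q) ω < ε (i + 3) ω} ∩ {ω | ε (i + 4) ω < ε (i + 3 - Q) ω}
    with hB
  have hms : MeasurableSet s :=
    (measurableSet_lt (hmeas _) (hmeas _)).inter (measurableSet_lt (hmeas _) (hmeas _))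
  -- measures of the pieces
  have half : ∀ {a b : ℤ}, a ≠ b → μ {ω | ε a ω < ε b ω} = 1 / 2 :=
    fun hab => aux_half hmeas hindep hid hatomless hab
  have hμs : μ s = 1 / 4 := by
    rw [hs, aux_indep_lt hmeas hindep (by omega) (by omega) (by omega) (by omega),
      half (by omega), half (by omega)]
    rw [one_div, one_div, ← ENNReal.mul_inv (by norm_num) (by norm_num)]
    norm_num
  have hμB : μ B = 1 / 4 := by
    rw [hB, aux_indep_lt hmeas hindep (by omega) (by omega) (by omega) (by omega),
      half (by omega), half (by omega)]
    rw [one_div, one_div, ← ENNReal.mul_inv (by norm_num) (by norm_num)]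
    norm_num
  have hdisj : Disjoint ({i - 1 - Q, i, i + 1, i - Q} : Finset ℤ)
      ({i + 2 - Q, i + 3, i + 4, i + 3 - Q} : Finset ℤ) := by
    simp only [Finset.disjoint_left, Finset.mem_insert, Finset.mem_singleton]
    omega
  have hμsB : μ (s ∩ B) = 1 / 16 := by
    rw [hs, hB, aux_indep4 hmeas hindep hdisj, ← hs, ← hB, hμs, hμB,
      one_div, one_div, ← ENNReal.mul_inv (by norm_num) (by norm_num)]
    norm_num
  -- the target and conditional probability
  rw [hs_eq, ht_eq, cond_apply hms]
  have hnull : μ {ω | ε (i + 1 - Q) ω = ε (i + 2) ω} = 0 :=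
    aux_eq_null hmeas hindep hatomless (by omega)
  have hrw : s ∩ ({ω | ε (i + 1 - Q) ω ≠ ε (i + 2) ω} ∩ B)
      = (s ∩ B) ∩ {ω | ε (i + 1 - Q) ω = ε (i + 2) ω}ᶜ := by
    ext ω
    simp only [Set.mem_inter_iff, Set.mem_compl_iff, Set.mem_setOf_eq]
    tauto
  have hconull : μ ((s ∩ B) ∩ {ω | ε (i + 1 - Q) ω = ε (i + 2) ω}ᶜ) = μ (s ∩ B) :=
    measure_inter_conull (by rwa [compl_compl])
  rw [hrw, hconull, hμsB, hμs, one_div, inv_inv, one_div,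
    show (16 : ENNReal) = 4 * 4 by norm_num, ENNReal.mul_inv (by norm_num) (by norm_num),
    ← mul_assoc, ENNReal.mul_inv_cancel (by norm_num) (by norm_num), one_mul]
end

section
/- For the MA(q) process with q > 3 and continuous i.i.d. innovations, the probability that ξ_{i-1} < ξ_i > ξ_{i+1}, ξ_{i+2} < ξ_{i+3} > ξ_{i+4} holds (with no constraint relating ξ_{i+1}, ξ_{i+2}) equals 1/16, since the middle comparison ε_{i-q+1} vs ε_{i+2} contributes probability 1 to the union of the two orderings. -/
open MeasureTheory ProbabilityTheory

/-- For `q > 3` with atomless i.i.d. innovations, the probability that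
`ξ_{i-1} < ξ_i > ξ_{i+1}` and `ξ_{i+2} < ξ_{i+3} > ξ_{i+4}` (with no constraint
relating `ξ_{i+1}` and `ξ_{i+2}`) equals `1/16`. -/
theorem MA_prob_two_peaks_gap
    {Ω : Type*} [MeasurableSpace Ω] (μ : Measure Ω) [IsProbabilityMeasure μ]
    (ε : ℤ → Ω → ℝ) (hmeas : ∀ i, Measurable (ε i))
    (hindep : iIndepFun ε μ)
    (hid : ∀ i j : ℤ, IdentDistrib (ε i) (ε j) μ μ)
    (hatomless : ∀ (i : ℤ) (a : ℝ), μ {ω | ε i ω = a} = 0)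
    (q : ℕ) (hq : 3 < q) (i : ℤ) :
    μ {ω | MAerr q ε (i - 1) ω < MAerr q ε i ω ∧ MAerr q ε i ω > MAerr q ε (i + 1) ω ∧
        MAerr q ε (i + 2) ω < MAerr q ε (i + 3) ω ∧
        MAerr q ε (i + 3) ω > MAerr q ε (i + 4) ω} = 1 / 16 := by
  classical
  -- telescoping of consecutive sums
  have hdec : ∀ (a b : ℤ), b = a + 1 → ∀ ω,
      MAerr q ε b ω - MAerr q ε a ω = ε b ω - ε (a - q) ω := by
    rintro a b rfl ω
    have h1 : MAerr q ε (a + 1) ω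
        = (∑ j ∈ Finset.range q, ε (a - (j : ℤ)) ω) + ε (a + 1) ω := by
      rw [MAerr, Finset.sum_range_succ']
      congr 1
      · refine Finset.sum_congr rfl fun j _ => ?_
        congr 1
        push_cast
        ring
      · congr 1
        push_cast
        ring
    have h2 : MAerr q ε a ω
        = (∑ j ∈ Finset.range q, ε (a - (j : ℤ)) ω) + ε (a - q) ω := by
      rw [MAerr, Finset.sum_range_succ]
    rw [h1, h2]; ring
  have hiff : ∀ (a b : ℤ), b = a + 1 → ∀ ω,
      (MAerr q ε a ω < MAerr q ε b ω ↔ ε (a - q) ω < ε b ω) := by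
    intro a b hb ω
    rw [← sub_pos, hdec a b hb, sub_pos]
  have hiff' : ∀ (a b : ℤ), b = a + 1 → ∀ ω,
      (MAerr q ε b ω < MAerr q ε a ω ↔ ε b ω < ε (a - q) ω) := by
    intro a b hb ω
    rw [← sub_neg, hdec a b hb, sub_neg]
  have hset : {ω | MAerr q ε (i - 1) ω < MAerr q ε i ω ∧ MAerr q ε i ω > MAerr q ε (i + 1) ω ∧
        MAerr q ε (i + 2) ω < MAerr q ε (i + 3) ω ∧
        MAerr q ε (i + 3) ω > MAerr q ε (i + 4) ω}
      = {ω | ε (i - 1 - q) ω < ε i ω} ∩ ({ω | ε (i + 1) ω < ε (i - q) ω} ∩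
        ({ω | ε (i + 2 - q) ω < ε (i + 3) ω} ∩ {ω | ε (i + 4) ω < ε (i + 3 - q) ω})) := by
    ext ω
    simp only [Set.mem_setOf_eq, gt_iff_lt, Set.mem_inter_iff]
    rw [hiff (i - 1) i (by ring), hiff' i (i + 1) (by ring),
      hiff (i + 2) (i + 3) (by ring), hiff' (i + 3) (i + 4) (by ring)]
  rw [hset]
  -- law of a single innovation
  set ν : Measure ℝ := μ.map (ε 0) with hν
  have hνprob : IsProbabilityMeasure ν := Measure.isProbabilityMeasure_map (hmeas 0).aemeasurable
  have hmap : ∀ j : ℤ, μ.map (ε j) = ν := fun j => (hid j 0).map_eq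
  have hνatom : ∀ a : ℝ, ν {a} = 0 := by
    intro a
    rw [hν, Measure.map_apply (hmeas 0) (measurableSet_singleton a)]
    exact hatomless 0 a
  have hlt : MeasurableSet {p : ℝ × ℝ | p.1 < p.2} :=
    measurableSet_lt measurable_fst measurable_snd
  -- probability that one innovation is below another is 1/2
  have key : ∀ a b : ℤ, a ≠ b → μ {ω | ε a ω < ε b ω} = 1 / 2 := by
    intro a b hab
    have hind : IndepFun (ε a) (ε b) μ := hindep.indepFun hab
    have hjoint : μ.map (fun ω => (ε a ω, ε b ω)) = ν.prod ν := by
      rw [(indepFun_iff_map_prod_eq_prod_map_map (hmeas a).aemeasurable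
        (hmeas b).aemeasurable).mp hind, hmap, hmap]
    have h1 : μ {ω | ε a ω < ε b ω} = ν.prod ν {p : ℝ × ℝ | p.1 < p.2} := by
      rw [← hjoint, Measure.map_apply (by fun_prop) hlt]
      rfl
    set c := ν.prod ν {p : ℝ × ℝ | p.1 < p.2} with hc
    have hswap : ν.prod ν {p : ℝ × ℝ | p.2 < p.1} = c := by
      rw [hc]
      conv_rhs => rw [← Measure.prod_swap]
      rw [Measure.map_apply measurable_swap hlt]
      rfl
    have hdiag : ν.prod ν {p : ℝ × ℝ | p.1 = p.2} = 0 := by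
      rw [Measure.prod_apply (measurableSet_eq_fun measurable_fst measurable_snd)]
      have : ∀ x : ℝ, ν (Prod.mk x ⁻¹' {p : ℝ × ℝ | p.1 = p.2}) = 0 := by
        intro x
        have : (Prod.mk x ⁻¹' {p : ℝ × ℝ | p.1 = p.2}) = {x} := by
          ext y; simp [eq_comm]
        rw [this]
        exact hνatom x
      simp only [this, MeasureTheory.lintegral_zero]
    have hcompl : ν.prod ν {p : ℝ × ℝ | p.1 < p.2}ᶜ = 1 - c :=
      prob_compl_eq_one_sub hlt
    have hu : ({p : ℝ × ℝ | p.1 < p.2}ᶜ : Set (ℝ × ℝ))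
        = {p : ℝ × ℝ | p.2 < p.1} ∪ {p : ℝ × ℝ | p.1 = p.2} := by
      ext p
      simp only [Set.mem_compl_iff, Set.mem_setOf_eq, Set.mem_union, not_lt]
      constructor
      · intro h
        rcases lt_or_eq_of_le h with h' | h'
        · exact Or.inl h'
        · exact Or.inr h'.symm
      · rintro (h | h)
        · exact h.le
        · exact h.ge
    have hcompl2 : ν.prod ν {p : ℝ × ℝ | p.1 < p.2}ᶜ = c := by
      rw [hu]
      refine le_antisymm ((measure_union_le _ _).trans (le_of_eq ?_)) ?_
      · rw [hdiag, add_zero, hswap]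
      · rw [← hswap]
        exact measure_mono Set.subset_union_left
    have h2c : c + c = 1 := by
      have h1c : 1 - c = c := by rw [← hcompl, hcompl2]
      have hcle : c ≤ 1 := prob_le_one
      calc c + c = (1 - c) + c := by rw [h1c]
        _ = 1 := tsub_add_cancel_of_le hcle
    have : c = 1 / 2 := by
      refine (ENNReal.eq_div_iff two_ne_zero ENNReal.ofNat_ne_top).mpr ?_
      rw [two_mul]; exact h2c
    rw [h1]; exact this
  -- splitting into independent pieces
  have hsplit : ∀ (S T : Finset ℤ), Disjoint S T → ∀ (A B : Set Ω),
      MeasurableSet[MeasurableSpace.comap (fun ω (k : S) => ε k ω) MeasurableSpace.pi] A →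
      MeasurableSet[MeasurableSpace.comap (fun ω (k : T) => ε k ω) MeasurableSpace.pi] B →
      μ (A ∩ B) = μ A * μ B := by
    intro S T hST A B hA hB
    obtain ⟨s, hs, rfl⟩ := MeasurableSpace.measurableSet_comap.mp hA
    obtain ⟨t, ht, rfl⟩ := MeasurableSpace.measurableSet_comap.mp hB
    exact (hindep.indepFun_finset S T hST hmeas).measure_inter_preimage_eq_mul _ _ hs ht
  have hmem : ∀ (S : Finset ℤ) (a b : ℤ), a ∈ S → b ∈ S →
      MeasurableSet[MeasurableSpace.comap (fun ω (k : S) => ε k ω) MeasurableSpace.pi]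
        {ω | ε a ω < ε b ω} := by
    intro S a b ha hb
    exact ⟨{x : S → ℝ | x ⟨a, ha⟩ < x ⟨b, hb⟩},
      measurableSet_lt (measurable_pi_apply _) (measurable_pi_apply _), rfl⟩
  have hqz : (3 : ℤ) < (q : ℤ) := by exact_mod_cast hq
  rw [hsplit {i - 1 - q, i} {i + 1, i - q, i + 2 - q, i + 3, i + 4, i + 3 - q}
      (by simp only [Finset.disjoint_left, Finset.mem_insert, Finset.mem_singleton]; omega)
      _ _ (hmem _ _ _ (by simp) (by simp))
      ((hmem _ _ _ (by simp) (by simp)).inter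
        ((hmem _ _ _ (by simp) (by simp)).inter (hmem _ _ _ (by simp) (by simp)))),
    hsplit {i + 1, i - q} {i + 2 - q, i + 3, i + 4, i + 3 - q}
      (by simp only [Finset.disjoint_left, Finset.mem_insert, Finset.mem_singleton]; omega)
      _ _ (hmem _ _ _ (by simp) (by simp))
      ((hmem _ _ _ (by simp) (by simp)).inter (hmem _ _ _ (by simp) (by simp))),
    hsplit {i + 2 - q, i + 3} {i + 4, i + 3 - q}
      (by simp only [Finset.disjoint_left, Finset.mem_insert, Finset.mem_singleton]; omega)
      _ _ (hmem _ _ _ (by simp) (by simp)) (hmem _ _ _ (by simp) (by simp)),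
    key _ _ (by omega), key _ _ (by omega), key _ _ (by omega), key _ _ (by omega)]
  norm_num [div_eq_mul_inv, ← ENNReal.mul_inv]
end
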